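/- Let G be a transitive subgroup of the symmetric group S_{p+1} (p an odd prime) containing a transposition and a p-cycle. Then G = S_{p+1}. -/

import Mathlib

open Equiv Equiv.Perm Finset

/-- A transitive subgroup of `S_{p+1}` (`p` an odd prime) containing a transposition
and a `p`-cycle is all of `S_{p+1}`. -/
theorem stmt19 (p : ℕ) (hp : p.Prime) (hodd : Odd p)
    (G : Subgroup (Equiv.Perm (Fin (p + 1))))
    (htrans : ∀ x y : Fin (p + 1), ∃ g ∈ G, g x = y)
    (hswap : ∃ s ∈ G, Equiv.Perm.IsSwap s)
    (hcycle : ∃ c ∈ G, Equiv.Perm.IsCycle c ∧ c.support.card = p) :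
    G = ⊤ := by
  classical
  haveI : Fact p.Prime := ⟨hp⟩
  obtain ⟨s, hsG, a, b, hab, rfl⟩ := hswap
  obtain ⟨c, hcG, hc, hcard⟩ := hcycle
  -- basic facts
  have horder : orderOf c = p := hc.orderOf.trans hcard
  have hconj : ∀ g ∈ G, ∀ x y : Fin (p + 1), swap x y ∈ G → swap (g x) (g y) ∈ G := by
    intro g hg x y hxy
    rw [swap_apply_apply]
    exact mul_mem (mul_mem hg hxy) (inv_mem hg)
  have htransmem : ∀ x y z : Fin (p + 1), swap x y ∈ G → swap y z ∈ G → swap x z ∈ G :=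
    fun x y z h1 h2 => SubmonoidClass.swap_mem_trans G h1 h2
  -- the complement of the support has exactly one element
  have hcompl : (c.supportᶜ : Finset (Fin (p + 1))).card = 1 := by
    rw [Finset.card_compl, hcard]
    simp
  -- not both a, b outside support
  have hkey : ∃ y z : Fin (p + 1), y ∈ c.support ∧ z ∈ c.support ∧ y ≠ z ∧ swap y z ∈ G := by
    by_cases ha : a ∈ c.support
    · by_cases hb : b ∈ c.support
      · exact ⟨a, b, ha, hb, hab, hsG⟩
      · -- b is fixed by c; use c•a
        have hcb : c b = b := Equiv.Perm.notMem_support.mp hb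
        have h2 : swap (c a) (c b) ∈ G := hconj c hcG a b hsG
        rw [hcb] at h2
        have hca : c a ≠ a := Equiv.Perm.mem_support.mp ha
        refine ⟨a, c a, ha, Equiv.Perm.apply_mem_support.mpr ha, hca.symm, ?_⟩
        exact htransmem a b (c a) hsG (by rwa [swap_comm])
    · by_cases hb : b ∈ c.support
      · have hca : c a = a := Equiv.Perm.notMem_support.mp ha
        have h2 : swap (c a) (c b) ∈ G := hconj c hcG a b hsG
        rw [hca] at h2
        have hcb : c b ≠ b := Equiv.Perm.mem_support.mp hb
        refine ⟨b, c b, hb, Equiv.Perm.apply_mem_support.mpr hb, hcb.symm, ?_⟩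
        exact htransmem b a (c b) (by rwa [swap_comm]) h2
      · exfalso
        have : ({a, b} : Finset (Fin (p + 1))) ⊆ c.supportᶜ := by
          intro x hx
          simp only [Finset.mem_insert, Finset.mem_singleton] at hx
          rcases hx with rfl | rfl
          · exact Finset.mem_compl.mpr ha
          · exact Finset.mem_compl.mpr hb
        have := Finset.card_le_card this
        rw [hcompl, Finset.card_insert_of_notMem (by simpa using hab),
          Finset.card_singleton] at this
        omega
  obtain ⟨y, z, hy, hz, hyz, hyzG⟩ := hkey
  -- z = c^k y for some k not divisible by p
  obtain ⟨k, hk⟩ := hc.exists_pow_eq (Equiv.Perm.mem_support.mp hy) (Equiv.Perm.mem_support.mp hz)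
  have hpk : ¬ p ∣ k := by
    intro hdvd
    apply hyz
    rw [← hk]
    rw [← horder] at hdvd
    rw [orderOf_dvd_iff_pow_eq_one.mp hdvd]
    rfl
  -- chain: swap y (c^(j*k) y) ∈ G for all j
  have hchain : ∀ j : ℕ, swap y ((c ^ (j * k)) y) ∈ G := by
    intro j
    induction j with
    | zero => simp; exact G.one_mem
    | succ j ih =>
      have h2 : swap ((c ^ (j * k)) y) ((c ^ (j * k)) ((c ^ k) y)) ∈ G := by
        rw [hk]
        exact hconj _ (Subgroup.pow_mem G hcG _) y z hyzG
      have h3 : (c ^ (j * k)) ((c ^ k) y) = (c ^ ((j + 1) * k)) y := by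
        rw [← Equiv.Perm.mul_apply, ← pow_add]
        ring_nf
      rw [h3] at h2
      exact htransmem _ _ _ ih h2
  -- hence swap y (c^m y) ∈ G for all m
  have hall : ∀ m : ℕ, swap y ((c ^ m) y) ∈ G := by
    intro m
    have hku : (k : ZMod p) ≠ 0 := by
      rwa [Ne, ZMod.natCast_eq_zero_iff]
    set j : ℕ := ((m : ZMod p) * (k : ZMod p)⁻¹).val with hj
    have hcast : ((j * k : ℕ) : ZMod p) = (m : ZMod p) := by
      push_cast
      rw [hj, ZMod.natCast_val, ZMod.cast_id]
      field_simp
    have : c ^ (j * k) = c ^ m := by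
      rw [pow_eq_pow_iff_modEq, horder, ← ZMod.natCast_eq_natCast_iff]
      exact hcast
    rw [← this]
    exact hchain j
  -- hence swap between any two support elements is in G
  have hsupp : ∀ u ∈ c.support, swap y u ∈ G := by
    intro u hu
    obtain ⟨m, hm⟩ := hc.exists_pow_eq (Equiv.Perm.mem_support.mp hy)
      (Equiv.Perm.mem_support.mp hu)
    rw [← hm]
    exact hall m
  -- the fixed point: get f outside support, connect via counting
  obtain ⟨f, hf⟩ : ∃ f, f ∈ c.supportᶜ := Finset.card_pos.mp (by rw [hcompl]; norm_num)
  obtain ⟨g, hgG, hgy⟩ := htrans y f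
  have himg : ∀ u ∈ c.support, swap f (g u) ∈ G := by
    intro u hu
    have := hconj g hgG y u (hsupp u hu)
    rwa [hgy] at this
  -- support and g '' support must intersect
  have hinter : ∃ t, t ∈ c.support ∧ t ∈ c.support.image g := by
    by_contra h
    push_neg at h
    have hdisj : Disjoint c.support (c.support.image g) := by
      rw [Finset.disjoint_left]
      intro t ht ht'
      exact h t ht ht'
    have hcard2 : (c.support ∪ c.support.image g).card = p + p := by
      rw [Finset.card_union_of_disjoint hdisj, Finset.card_image_of_injective _ g.injective,
        hcard]
    have := Finset.card_le_card (Finset.subset_univ (c.support ∪ c.support.image g))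
    rw [hcard2, Finset.card_univ, Fintype.card_fin] at this
    have := hp.two_le
    omega
  obtain ⟨t, ht1, ht2⟩ := hinter
  obtain ⟨u, hu, rfl⟩ := Finset.mem_image.mp ht2
  have hyf : swap y f ∈ G :=
    htransmem y (g u) f (hsupp _ ht1) (by rw [swap_comm]; exact himg u hu)
  -- now swap y w ∈ G for every w
  have hally : ∀ w : Fin (p + 1), swap y w ∈ G := by
    intro w
    by_cases hw : w ∈ c.support
    · exact hsupp w hw
    · have : w = f := by
        have h1 : w ∈ c.supportᶜ := Finset.mem_compl.mpr hw
        have := Finset.card_le_one.mp (le_of_eq hcompl) w h1 f hf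
        exact this
      rw [this]; exact hyf
  -- all swaps are in G
  have hallswaps : ∀ u v : Fin (p + 1), swap u v ∈ G := fun u v =>
    htransmem u y v (by rw [swap_comm]; exact hally u) (hally v)
  -- conclude
  rw [eq_top_iff, ← Equiv.Perm.closure_isSwap, Subgroup.closure_le]
  rintro σ ⟨u, v, -, rfl⟩
  exact hallswaps u v
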